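/- Let d, k, n ≥ 2 and let (j_1,…,j_n) and (j′_1,…,j′_n) be two distinct n-tuples in {1,…,k}^n with j_1 + ⋯ + j_n = j′_1 + ⋯ + j′_n. Then the closure of A_{j_1} × ⋯ × A_{j_n} in F(ℝ^d,k)^n is disjoint from A_{j′_1} × ⋯ × A_{j′_n}. -/

import Mathlib

open unitInterval

noncomputable section

/-- Euclidean space ℝ^d. -/
abbrev E (d : ℕ) : Type := EuclideanSpace ℝ (Fin d)

/-- The ordered configuration space F(ℝ^d, k) of k distinct points in ℝ^d,
viewed as the subspace of (ℝ^d)^k of injective tuples. -/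
def Conf (d k : ℕ) : Set (Fin k → E d) := {x | Function.Injective x}

/-- The time i/(n-1) ∈ [0,1] at which the i-th configuration is visited. -/
def eTime (n : ℕ) (i : Fin n) : unitInterval :=
  Set.projIcc 0 1 zero_le_one ((i : ℝ) / ((n : ℝ) - 1))

/-- The evaluation map e_n : P(X) → X^n,
e_n(γ) = (γ(0), γ(1/(n-1)), …, γ((n-2)/(n-1)), γ(1)). -/
def evalMap {X : Type*} [TopologicalSpace X] (n : ℕ) (γ : C(unitInterval, X)) : Fin n → X :=
  fun i => γ (eTime n i)

/-- `A ⊆ X^n` admits a continuous section of the evaluation map e_n. -/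
def HasSec {X : Type*} [TopologicalSpace X] (n : ℕ) (A : Set (Fin n → X)) : Prop :=
  ∃ s : A → C(unitInterval, X), Continuous s ∧ ∀ a : A, evalMap n (s a) = (a : Fin n → X)

/-- The projection p : ℝ^d → ℝ^d onto the first coordinate axis. -/
def projL {d : ℕ} (x : E d) : E d :=
  (WithLp.equiv 2 (Fin d → ℝ)).symm fun j => if (j : ℕ) = 0 then x j else 0

/-- cp(C) = cardinality of {p(x_1),…,p(x_k)}. -/
def cp {d k : ℕ} (C : Fin k → E d) : ℕ := (Set.range fun i => projL (C i)).ncard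

/-- The product A_{j_1} × ⋯ × A_{j_n} ⊆ F(ℝ^d,k)^n. -/
def Aprod (d k n : ℕ) (jv : Fin n → ℕ) : Set (Fin n → ↥(Conf d k)) :=
  {C | ∀ s : Fin n, cp ((C s : Fin k → E d)) = jv s}

lemma continuous_projL {d : ℕ} : Continuous (projL (d := d)) := by
  unfold projL
  exact (PiLp.continuous_toLp 2 fun _ : Fin d => ℝ).comp <| continuous_pi fun j => by
    by_cases h : (j : ℕ) = 0 <;> simp only [h, if_true, if_false]
    · exact (continuous_apply j).comp (PiLp.continuous_ofLp 2 fun _ : Fin d => ℝ)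
    · exact continuous_const

lemma cp_le_iff {d k : ℕ} (C : Fin k → E d) (j : ℕ) :
    cp C ≤ j ↔ ∀ g : Fin (j + 1) → Fin k, ¬ Function.Injective (fun t => projL (C (g t))) := by
  classical
  set f : Fin k → E d := fun i => projL (C i) with hf
  have hrange : Set.range f = ↑(Finset.image f Finset.univ) := by
    simp [Finset.coe_image]
  have hcp : cp C = (Finset.image f Finset.univ).card := by
    rw [cp, ← hf, hrange, Set.ncard_coe_finset]
  constructor
  · intro hle g hinj
    have : (j + 1 : ℕ) ≤ (Finset.image f Finset.univ).card := by
      have : Finset.card (Finset.univ : Finset (Fin (j+1))) ≤ (Finset.image f Finset.univ).card := by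
        apply Finset.card_le_card_of_injOn (fun t => f (g t))
        · intro t _; exact Finset.mem_image_of_mem f (Finset.mem_univ _)
        · intro a _ b _ hab; exact hinj hab
      simpa using this
    omega
  · intro h
    by_contra hle
    have hcard : j + 1 ≤ (Finset.image f Finset.univ).card := by omega
    obtain ⟨t, hts, htc⟩ := Finset.exists_subset_card_eq hcard
    have e : Fin (j + 1) ≃ ↥t := (t.equivFin.trans (finCongr htc)).symm
    have hchoice : ∀ s : Fin (j + 1), ∃ i : Fin k, f i = (e s : E d) := by
      intro s
      have := hts (e s).2
      simpa [Finset.mem_image] using this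
    choose g hg using hchoice
    apply h g
    intro a b hab
    have hab' : (e a : E d) = (e b : E d) := by
      rw [← hg a, ← hg b]; exact hab
    exact e.injective (Subtype.ext hab')

lemma isClosed_cp_le {d k : ℕ} (j : ℕ) : IsClosed {C : Fin k → E d | cp C ≤ j} := by
  have : {C : Fin k → E d | cp C ≤ j} =
      ⋂ g : Fin (j + 1) → Fin k, ⋃ a, ⋃ b,
        {C : Fin k → E d | a ≠ b ∧ projL (C (g a)) = projL (C (g b))} := by
    ext C
    simp only [Set.mem_setOf_eq, Set.mem_iInter, Set.mem_iUnion, cp_le_iff]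
    constructor
    · intro h g
      obtain ⟨a, b, hab, hne⟩ := Function.not_injective_iff.mp (h g)
      exact ⟨a, b, hne, hab⟩
    · intro h g
      obtain ⟨a, b, hne, hab⟩ := h g
      exact Function.not_injective_iff.mpr ⟨a, b, hab, hne⟩
  rw [this]
  refine isClosed_iInter fun g => isClosed_iUnion_of_finite fun a =>
    isClosed_iUnion_of_finite fun b => ?_
  by_cases hab : a = b
  · have : {C : Fin k → E d | a ≠ b ∧ projL (C (g a)) = projL (C (g b))} = ∅ := by
      ext C; simp [hab]
    rw [this]; exact isClosed_empty
  · have : {C : Fin k → E d | a ≠ b ∧ projL (C (g a)) = projL (C (g b))} =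
        {C : Fin k → E d | projL (C (g a)) = projL (C (g b))} := by
      ext C; simp [hab]
    rw [this]
    exact isClosed_eq (continuous_projL.comp (continuous_apply (g a)))
      (continuous_projL.comp (continuous_apply (g b)))

/-- For d, k, n ≥ 2 and distinct n-tuples (j_1,…,j_n) ≠
(j'_1,…,j'_n) in {1,…,k}^n with equal sums, the closure of A_{j_1} × ⋯ × A_{j_n}
in F(ℝ^d,k)^n is disjoint from A_{j'_1} × ⋯ × A_{j'_n}. -/
theorem stmt8 (d k n : ℕ) (hd : 2 ≤ d) (hk : 2 ≤ k) (hn : 2 ≤ n)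
    (jv jv' : Fin n → ℕ)
    (hjv : ∀ s, 1 ≤ jv s ∧ jv s ≤ k) (hjv' : ∀ s, 1 ≤ jv' s ∧ jv' s ≤ k)
    (hne : jv ≠ jv') (hsum : (∑ s, jv s) = ∑ s, jv' s) :
    closure (Aprod d k n jv) ∩ Aprod d k n jv' = ∅ := by
  ext x
  simp only [Set.mem_inter_iff, Set.mem_empty_iff_false, iff_false]
  rintro ⟨hxc, hx'⟩
  have key : ∀ s, cp ((x s : Fin k → E d)) ≤ jv s := by
    have hsub : closure (Aprod d k n jv) ⊆
        {C : Fin n → ↥(Conf d k) | ∀ s, cp ((C s : Fin k → E d)) ≤ jv s} := by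
      apply closure_minimal
      · intro C hC s; exact (hC s).le
      · have heq : {C : Fin n → ↥(Conf d k) | ∀ s, cp ((C s : Fin k → E d)) ≤ jv s} =
            ⋂ s, (fun C : Fin n → ↥(Conf d k) => (C s : Fin k → E d)) ⁻¹' {D | cp D ≤ jv s} := by
          ext C; simp
        rw [heq]
        exact isClosed_iInter fun s => (isClosed_cp_le (jv s)).preimage
          (continuous_subtype_val.comp (continuous_apply s))
    exact fun s => hsub hxc s
  have hle : ∀ s, jv' s ≤ jv s := fun s => (hx' s) ▸ key s
  have heq2 : ∀ s ∈ Finset.univ, jv' s = jv s :=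
    (Finset.sum_eq_sum_iff_of_le fun s _ => hle s).mp hsum.symm
  exact hne (funext fun s => (heq2 s (Finset.mem_univ s)).symm)
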